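/- Let F : (0,∞) → ℝ be differentiable such that σ_F(x) := sup_{y ≥ x} |F(y)| is finite for all x > 0, monotonically nonincreasing, and integrable on (0,∞), and such that ∫_0^∞ y |F'(y)| dy < ∞. Fix x₀ ≥ 0 and 0 ≤ δ < 1 with σ_{1F}(2x₀) ≤ δ, where σ_{1F}(x) := ∫_x^∞ σ_F(y) dy, and set σ_{2F}(x) := ∫_x^∞ |F'(y)| dy. Suppose for every x ≥ x₀ a function g : [x₀,∞) → ℝ satisfies |g(x)| ≤ 2|F'(2x)| + c σ_F(2x)² + c σ_F(2x) σ_{2F}(2x) + c σ_{1F}(2x) σ_F(2x)² for some constant c > 0. Then ∫_{x₀}^∞ x |g(x)| dx < ∞. In particular, the potential q(x) := −2 Ȧ(x,x) recovered from the Marchenko kernel satisfies ∫_{x₀}^∞ x |q(x)| dx < ∞. -/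

import Mathlib

open MeasureTheory Set Filter

/-- `σ_F(x) := sup_{y ≥ x} |F(y)|`. -/
noncomputable def sigmaF (F : ℝ → ℝ) (x : ℝ) : ℝ :=
  sSup ((fun y => |F y|) '' Set.Ici x)

/-- if `σ_F` is finite, nonincreasing and integrable on `(0,∞)`,
`∫_0^∞ y|F'(y)| dy < ∞`, and `g` (playing the role of `Ȧ(x,x)`) satisfies the pointwise
bound `|g(x)| ≤ 2|F'(2x)| + c σ_F(2x)² + c σ_F(2x) σ_{2F}(2x) + c σ_{1F}(2x) σ_F(2x)²`
for `x ≥ x₀`, then `∫_{x₀}^∞ x|g(x)| dx < ∞`; in particular the potential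
`q = −2g` satisfies `∫_{x₀}^∞ x|q(x)| dx < ∞`. -/
theorem weighted_integrability_of_diagonal_bound
    (F F' : ℝ → ℝ) (hFderiv : ∀ y > (0 : ℝ), HasDerivAt F (F' y) y)
    (hFbdd : ∀ x > (0 : ℝ), BddAbove ((fun y => |F y|) '' Set.Ici x))
    (hmono : AntitoneOn (sigmaF F) (Set.Ioi 0))
    (hσint : IntegrableOn (sigmaF F) (Set.Ioi 0))
    (hF'w : IntegrableOn (fun y => y * |F' y|) (Set.Ioi 0))
    (x₀ δ : ℝ) (hx₀ : 0 ≤ x₀) (hδ0 : 0 ≤ δ) (hδ1 : δ < 1)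
    (hsmall : (∫ y in Set.Ioi (2 * x₀), sigmaF F y) ≤ δ)
    (g : ℝ → ℝ) (c : ℝ) (hc : 0 < c)
    (hg : ∀ x ≥ x₀, |g x| ≤ 2 * |F' (2 * x)| + c * (sigmaF F (2 * x)) ^ 2
      + c * sigmaF F (2 * x) * (∫ y in Set.Ioi (2 * x), |F' y|)
      + c * (∫ y in Set.Ioi (2 * x), sigmaF F y) * (sigmaF F (2 * x)) ^ 2) :
    (∫⁻ x in Set.Ioi x₀, ENNReal.ofReal (x * |g x|)) < ⊤ ∧
    ∀ q : ℝ → ℝ, (∀ x, q x = -2 * g x) →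
      (∫⁻ x in Set.Ioi x₀, ENNReal.ofReal (x * |q x|)) < ⊤ := by
  -- nonnegativity of σ_F on (0,∞)
  have hσ0 : ∀ y > (0 : ℝ), 0 ≤ sigmaF F y := fun y hy =>
    le_trans (abs_nonneg (F y)) (le_csSup (hFbdd y hy) ⟨y, Set.mem_Ici.mpr le_rfl, rfl⟩)
  set M : ℝ := ∫ y in Set.Ioi (0:ℝ), sigmaF F y with hMdef
  set C : ℝ := ∫ y in Set.Ioi (0:ℝ), y * |F' y| with hCdef
  have hσae : (0 : ℝ → ℝ) ≤ᵐ[volume.restrict (Set.Ioi (0:ℝ))] sigmaF F := by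
    filter_upwards [ae_restrict_mem measurableSet_Ioi] with y hy
    exact hσ0 y hy
  -- bound 1 : x σ(2x) ≤ M for x > 0
  have h1 : ∀ x > (0:ℝ), x * sigmaF F (2 * x) ≤ M := by
    intro x hx
    have h2x : (0:ℝ) < 2 * x := by linarith
    have hsub : Set.Ioc x (2 * x) ⊆ Set.Ioi 0 := fun t ht => lt_trans hx ht.1
    have hint : IntegrableOn (sigmaF F) (Set.Ioc x (2 * x)) := hσint.mono_set hsub
    have hconst : x * sigmaF F (2 * x) = ∫ _t in Set.Ioc x (2 * x), sigmaF F (2 * x) := by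
      rw [setIntegral_const, measureReal_def, Real.volume_Ioc, ENNReal.toReal_ofReal (by linarith)]
      rw [smul_eq_mul]; ring
    have hcint : IntegrableOn (fun _ : ℝ => sigmaF F (2 * x)) (Set.Ioc x (2 * x)) := by
      refine integrableOn_const (ne_of_lt ?_)
      rw [Real.volume_Ioc]; exact ENNReal.ofReal_lt_top
    have hle1 : (∫ _t in Set.Ioc x (2 * x), sigmaF F (2 * x))
        ≤ ∫ t in Set.Ioc x (2 * x), sigmaF F t := by
      refine setIntegral_mono_on hcint hint measurableSet_Ioc (fun t ht => ?_)
      exact hmono (hsub ht) h2x ht.2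
    have hle2 : (∫ t in Set.Ioc x (2 * x), sigmaF F t) ≤ M :=
      setIntegral_mono_set hσint hσae (HasSubset.Subset.eventuallyLE hsub)
    rw [hconst]; exact le_trans hle1 hle2
  -- bound 2 : x ∫_{2x}^∞ |F'| ≤ C for x > 0
  have h2 : ∀ x > (0:ℝ), x * (∫ y in Set.Ioi (2 * x), |F' y|) ≤ C := by
    intro x hx
    have h2x : (0:ℝ) < 2 * x := by linarith
    have hsub : Set.Ioi (2 * x) ⊆ Set.Ioi (0:ℝ) := Set.Ioi_subset_Ioi h2x.le
    have hwint : IntegrableOn (fun y => y * |F' y|) (Set.Ioi (2 * x)) := hF'w.mono_set hsub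
    have hmeas : AEStronglyMeasurable (fun y => |F' y|) (volume.restrict (Set.Ioi (2 * x))) := by
      refine ((measurable_deriv F).abs.aestronglyMeasurable).congr ?_
      filter_upwards [ae_restrict_mem measurableSet_Ioi] with y hy
      simp only [(hFderiv y (lt_trans h2x hy)).deriv]
    have hFint : IntegrableOn (fun y => |F' y|) (Set.Ioi (2 * x)) := by
      refine Integrable.mono' (hwint.const_mul (1 / (2 * x))) hmeas ?_
      filter_upwards [ae_restrict_mem measurableSet_Ioi] with y hy
      have hy' : 2 * x ≤ y := le_of_lt hy
      rw [Real.norm_eq_abs, abs_abs]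
      have : 2 * x * |F' y| ≤ y * |F' y| := mul_le_mul_of_nonneg_right hy' (abs_nonneg _)
      rw [div_mul_eq_mul_div, one_mul, le_div_iff₀ h2x, mul_comm (|F' y|) (2*x)]
      exact this
    have e1 : x * (∫ y in Set.Ioi (2 * x), |F' y|)
        = ∫ y in Set.Ioi (2 * x), x * |F' y| := (integral_const_mul x _).symm
    have hxint : IntegrableOn (fun y => x * |F' y|) (Set.Ioi (2 * x)) := hFint.const_mul x
    have hle1 : (∫ y in Set.Ioi (2 * x), x * |F' y|)
        ≤ ∫ y in Set.Ioi (2 * x), y * |F' y| := by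
      refine setIntegral_mono_on hxint hwint measurableSet_Ioi (fun y hy => ?_)
      exact mul_le_mul_of_nonneg_right (by nlinarith [le_of_lt (Set.mem_Ioi.mp hy)])
        (abs_nonneg _)
    have hwae : (0 : ℝ → ℝ) ≤ᵐ[volume.restrict (Set.Ioi (0:ℝ))] fun y => y * |F' y| := by
      filter_upwards [ae_restrict_mem measurableSet_Ioi] with y hy
      exact mul_nonneg (le_of_lt hy) (abs_nonneg _)
    have hle2 : (∫ y in Set.Ioi (2 * x), y * |F' y|) ≤ C :=
      setIntegral_mono_set hF'w hwae (HasSubset.Subset.eventuallyLE hsub)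
    rw [e1]; exact le_trans hle1 hle2
  -- bound 3 : ∫_{2x}^∞ σ ≤ δ for x ≥ x₀
  have h3 : ∀ x ≥ x₀, (∫ y in Set.Ioi (2 * x), sigmaF F y) ≤ δ := by
    intro x hx
    have hsub0 : Set.Ioi (2 * x₀) ⊆ Set.Ioi (0:ℝ) := fun t ht => by
      simp only [Set.mem_Ioi] at *; linarith
    have hσae' : (0 : ℝ → ℝ) ≤ᵐ[volume.restrict (Set.Ioi (2 * x₀))] sigmaF F := by
      filter_upwards [ae_restrict_mem measurableSet_Ioi] with y hy
      exact hσ0 y (hsub0 hy)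
    have hle : (∫ y in Set.Ioi (2 * x), sigmaF F y) ≤ ∫ y in Set.Ioi (2 * x₀), sigmaF F y :=
      setIntegral_mono_set (hσint.mono_set hsub0) hσae'
        (HasSubset.Subset.eventuallyLE (Set.Ioi_subset_Ioi (by linarith)))
    exact le_trans hle hsmall
  have hM0 : 0 ≤ M := setIntegral_nonneg measurableSet_Ioi (fun y hy => hσ0 y hy)
  have hC0 : 0 ≤ C := setIntegral_nonneg measurableSet_Ioi
    (fun y hy => mul_nonneg (le_of_lt hy) (abs_nonneg _))
  set K : ℝ := c * M + c * C + c * δ * M with hKdef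
  set B : ℝ → ℝ := fun x => 2 * x * |F' (2 * x)| + K * sigmaF F (2 * x) with hBdef
  -- integrability of the majorant on (x₀,∞)
  have part1 : IntegrableOn (fun x => (2 * x) * |F' (2 * x)|) (Set.Ioi (0:ℝ)) := by
    have := (integrableOn_Ioi_comp_mul_left_iff (fun y => y * |F' y|) 0 two_pos).2
      (by simpa using hF'w)
    simpa using this
  have part2 : IntegrableOn (fun x => sigmaF F (2 * x)) (Set.Ioi (0:ℝ)) := by
    have := (integrableOn_Ioi_comp_mul_left_iff (sigmaF F) 0 two_pos).2
      (by simpa using hσint)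
    simpa using this
  have hBint : IntegrableOn B (Set.Ioi x₀) := by
    have hB0 : IntegrableOn B (Set.Ioi (0:ℝ)) := part1.add (part2.const_mul K)
    exact hB0.mono_set (Set.Ioi_subset_Ioi hx₀)
  -- the pointwise bound
  have hpoint : ∀ x ∈ Set.Ioi x₀, x * |g x| ≤ B x := by
    intro x hx
    rw [Set.mem_Ioi] at hx
    have hx0 : (0:ℝ) < x := lt_of_le_of_lt hx₀ hx
    have h2x : (0:ℝ) < 2 * x := by linarith
    have hσn : 0 ≤ sigmaF F (2 * x) := hσ0 _ h2x
    have hxσ : x * sigmaF F (2 * x) ≤ M := h1 x hx0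
    have hxI : x * (∫ y in Set.Ioi (2 * x), |F' y|) ≤ C := h2 x hx0
    have hδx : (∫ y in Set.Ioi (2 * x), sigmaF F y) ≤ δ := h3 x hx.le
    have hδxn : 0 ≤ ∫ y in Set.Ioi (2 * x), sigmaF F y :=
      setIntegral_nonneg measurableSet_Ioi (fun y hy => hσ0 y (lt_trans h2x hy))
    have hIn : 0 ≤ ∫ y in Set.Ioi (2 * x), |F' y| :=
      setIntegral_nonneg measurableSet_Ioi (fun y _ => abs_nonneg _)
    have step1 : x * |g x| ≤ x * (2 * |F' (2 * x)| + c * (sigmaF F (2 * x)) ^ 2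
        + c * sigmaF F (2 * x) * (∫ y in Set.Ioi (2 * x), |F' y|)
        + c * (∫ y in Set.Ioi (2 * x), sigmaF F y) * (sigmaF F (2 * x)) ^ 2) :=
      mul_le_mul_of_nonneg_left (hg x (le_of_lt hx)) hx0.le
    have t1 : x * (c * (sigmaF F (2 * x)) ^ 2) ≤ c * M * sigmaF F (2 * x) := by
      have e : x * (c * (sigmaF F (2 * x)) ^ 2)
          = c * ((x * sigmaF F (2 * x)) * sigmaF F (2 * x)) := by ring
      rw [e, show c * M * sigmaF F (2 * x) = c * (M * sigmaF F (2 * x)) by ring]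
      exact mul_le_mul_of_nonneg_left (mul_le_mul_of_nonneg_right hxσ hσn) hc.le
    have t2 : x * (c * sigmaF F (2 * x) * (∫ y in Set.Ioi (2 * x), |F' y|))
        ≤ c * C * sigmaF F (2 * x) := by
      have e : x * (c * sigmaF F (2 * x) * (∫ y in Set.Ioi (2 * x), |F' y|))
          = (c * sigmaF F (2 * x)) * (x * (∫ y in Set.Ioi (2 * x), |F' y|)) := by ring
      rw [e, show c * C * sigmaF F (2 * x) = (c * sigmaF F (2 * x)) * C by ring]
      exact mul_le_mul_of_nonneg_left hxI (mul_nonneg hc.le hσn)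
    have t3 : x * (c * (∫ y in Set.Ioi (2 * x), sigmaF F y) * (sigmaF F (2 * x)) ^ 2)
        ≤ c * δ * M * sigmaF F (2 * x) := by
      have e : x * (c * (∫ y in Set.Ioi (2 * x), sigmaF F y) * (sigmaF F (2 * x)) ^ 2)
          = c * ((∫ y in Set.Ioi (2 * x), sigmaF F y)
              * ((x * sigmaF F (2 * x)) * sigmaF F (2 * x))) := by ring
      rw [e, show c * δ * M * sigmaF F (2 * x) = c * (δ * (M * sigmaF F (2 * x))) by ring]
      refine mul_le_mul_of_nonneg_left ?_ hc.le
      exact mul_le_mul hδx (mul_le_mul_of_nonneg_right hxσ hσn)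
        (mul_nonneg (mul_nonneg hx0.le hσn) hσn) hδ0
    have hBx : B x = 2 * x * |F' (2 * x)| + K * sigmaF F (2 * x) := rfl
    rw [hBx, hKdef]
    nlinarith [step1, t1, t2, t3]
  -- finiteness of the main integral
  have hKey : (∫⁻ x in Set.Ioi x₀, ENNReal.ofReal (x * |g x|)) < ⊤ := by
    have hmle : (∫⁻ x in Set.Ioi x₀, ENNReal.ofReal (x * |g x|))
        ≤ ∫⁻ x in Set.Ioi x₀, ENNReal.ofReal (B x) := by
      refine lintegral_mono_ae ?_
      filter_upwards [ae_restrict_mem measurableSet_Ioi] with x hx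
      exact ENNReal.ofReal_le_ofReal (hpoint x hx)
    exact lt_of_le_of_lt hmle hBint.setLIntegral_lt_top
  refine ⟨hKey, fun q hq => ?_⟩
  have hqe : ∀ x : ℝ, ENNReal.ofReal (x * |q x|) = 2 * ENNReal.ofReal (x * |g x|) := by
    intro x
    rw [hq x, show |(-2 : ℝ) * g x| = 2 * |g x| by rw [abs_mul]; norm_num,
      show x * (2 * |g x|) = 2 * (x * |g x|) by ring,
      ENNReal.ofReal_mul (by norm_num : (0:ℝ) ≤ 2)]
    norm_num
  calc (∫⁻ x in Set.Ioi x₀, ENNReal.ofReal (x * |q x|))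
      = ∫⁻ x in Set.Ioi x₀, 2 * ENNReal.ofReal (x * |g x|) := by
        simp only [hqe]
    _ = 2 * ∫⁻ x in Set.Ioi x₀, ENNReal.ofReal (x * |g x|) :=
        lintegral_const_mul' 2 _ (by norm_num)
    _ < ⊤ := ENNReal.mul_lt_top (by norm_num) hKey
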